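/- Let n = 2m for some m ∈ ℤ_{>0}, and fix a count vector v = (v₁₁, 2, 0, v₀₀) with entries summing to n. Then the probability mass function of T(v, Z) is symmetric–decreasing on the lattice m^{-1}ℤ. -/

import Mathlib

open Finset

/-- Real value of a binary outcome. -/
noncomputable def b2r (b : Bool) : ℝ := if b then 1 else 0

/-- All assignments of `n` subjects in which exactly `m` receive treatment. -/
def Assign (n m : ℕ) : Finset (Fin n → Bool) :=
  Finset.univ.filter fun z => (Finset.univ.filter fun i => z i = true).card = m

/-- Probability of the event `E` under the uniform distribution on `Assign n m`. -/
noncomputable def Pr (n m : ℕ) (E : (Fin n → Bool) → Prop) : ℝ :=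
  haveI : DecidablePred E := fun z => Classical.propDecidable (E z)
  (((Assign n m).filter E).card : ℝ) / ((Assign n m).card : ℝ)

/-- The sample average treatment effect `τ(w)`.  For a table `w`, `(w i).1` is the
control potential outcome `w_i(0)` and `(w i).2` is the treatment potential outcome
`w_i(1)`. -/
noncomputable def sate (n : ℕ) (w : Fin n → Bool × Bool) : ℝ :=
  (∑ j, (b2r (w j).2 - b2r (w j).1)) / (n : ℝ)

/-- Observed outcomes generated by the table `w` under the assignment `z`. -/
def obsOutcome (n : ℕ) (w : Fin n → Bool × Bool) (z : Fin n → Bool) : Fin n → Bool :=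
  fun j => if z j then (w j).2 else (w j).1

/-- The Neyman difference-in-means estimator `T(Y, z)`. -/
noncomputable def neyman (n m : ℕ) (Y z : Fin n → Bool) : ℝ :=
  (∑ j, if z j then b2r (Y j) else 0) / (m : ℝ)
    - (∑ j, if z j then 0 else b2r (Y j)) / ((n : ℝ) - (m : ℝ))

/-- Permutation `p`-value of the table `w` given observed data `(Y, z)`. -/
noncomputable def pval (n m : ℕ) (w : Fin n → Bool × Bool) (Y z : Fin n → Bool) : ℝ :=
  Pr n m fun z' =>
    |neyman n m (obsOutcome n w z') z' - sate n w| ≥ |neyman n m Y z - sate n w|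

/-- The table `w` is possible given the observed data `(Y, z)`. -/
def PossibleTable (n : ℕ) (w : Fin n → Bool × Bool) (Y z : Fin n → Bool) : Prop :=
  ∀ j, (z j = true → (w j).2 = Y j) ∧ (z j = false → (w j).1 = Y j)

/-- Lower endpoint `L_α` of the exact confidence interval `I_α`. -/
noncomputable def Lb (n m : ℕ) (α : ℝ) (Y z : Fin n → Bool) : ℝ :=
  sInf {t : ℝ | ∃ w, PossibleTable n w Y z ∧ α ≤ pval n m w Y z ∧ sate n w = t}

/-- Upper endpoint `U_α` of the exact confidence interval `I_α`. -/
noncomputable def Ub (n m : ℕ) (α : ℝ) (Y z : Fin n → Bool) : ℝ :=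
  sSup {t : ℝ | ∃ w, PossibleTable n w Y z ∧ α ≤ pval n m w Y z ∧ sate n w = t}

/-- `vcount n w a b` is the number of subjects whose treatment potential outcome is `a`
and whose control potential outcome is `b`; e.g. `vcount n w true false = v₁₀`. -/
def vcount (n : ℕ) (w : Fin n → Bool × Bool) (a b : Bool) : ℕ :=
  (Finset.univ.filter fun i => (w i).2 = a ∧ (w i).1 = b).card

/-- `ncount n Y z a b = n_{ab}`, the number of subjects with assignment `a` and
observed outcome `b`. -/
def ncount (n : ℕ) (Y z : Fin n → Bool) (a b : Bool) : ℕ :=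
  (Finset.univ.filter fun j => z j = a ∧ Y j = b).card

/-- The pmf of the Neyman estimator `T(w, Z)` under the uniform random assignment. -/
noncomputable def pmfT (n m : ℕ) (w : Fin n → Bool × Bool) : ℝ → ℝ :=
  fun t => Pr n m fun z => neyman n m (obsOutcome n w z) z = t

/-- The lattice `m⁻¹ ℤ ⊆ ℝ`. -/
def lattZ (m : ℕ) : Set ℝ := {x | ∃ k : ℤ, x = (k : ℝ) / (m : ℝ)}

/-- The lattice `m⁻¹ (2ℤ) ⊆ ℝ`. -/
def lattEven (m : ℕ) : Set ℝ := {x | ∃ k : ℤ, x = (2 * (k : ℝ)) / (m : ℝ)}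

/-- The lattice `m⁻¹ (2ℤ + 1) ⊆ ℝ`. -/
def lattOdd (m : ℕ) : Set ℝ := {x | ∃ k : ℤ, x = (2 * (k : ℝ) + 1) / (m : ℝ)}

/-- `f` is symmetric about `μ` and decreasing away from `μ` along the lattice `L`
(symmetric–decreasing, SD). -/
def SDon (f : ℝ → ℝ) (L : Set ℝ) (μ : ℝ) : Prop :=
  (∀ x : ℝ, μ + x ∈ L → f (μ - x) = f (μ + x)) ∧
    ∀ x y : ℝ, 0 ≤ x → x ≤ y → μ + x ∈ L → μ + y ∈ L → f (μ + y) ≤ f (μ + x)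


lemma count3 {n : ℕ} (P Q R : Finset (Fin n))
    (hcov : ∀ i, i ∈ P ∨ i ∈ Q ∨ i ∈ R)
    (hPQ : Disjoint P Q) (hPR : Disjoint P R) (hQR : Disjoint Q R) (x s u : ℕ) :
    (Finset.univ.filter fun z : Fin n → Bool =>
        (P.filter fun i => z i = true).card = x ∧
        (Q.filter fun i => z i = true).card = s ∧
        (R.filter fun i => z i = true).card = u).card
      = P.card.choose x * (Q.card.choose s * R.card.choose u) := by
  have key : ∀ t : Finset (Fin n) × Finset (Fin n) × Finset (Fin n),
      t.1 ⊆ P → t.2.1 ⊆ Q → t.2.2 ⊆ R →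
      (P.filter fun i => (decide (i ∈ t.1 ∨ i ∈ t.2.1 ∨ i ∈ t.2.2)) = true) = t.1 ∧
      (Q.filter fun i => (decide (i ∈ t.1 ∨ i ∈ t.2.1 ∨ i ∈ t.2.2)) = true) = t.2.1 ∧
      (R.filter fun i => (decide (i ∈ t.1 ∨ i ∈ t.2.1 ∨ i ∈ t.2.2)) = true) = t.2.2 := by
    intro t h1s h2s h3s
    refine ⟨?_, ?_, ?_⟩
    · ext i
      simp only [Finset.mem_filter, decide_eq_true_eq]
      constructor
      · rintro ⟨hiP, (h | h | h)⟩
        · exact h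
        · exact absurd hiP (Finset.disjoint_right.mp hPQ (h2s h))
        · exact absurd hiP (Finset.disjoint_right.mp hPR (h3s h))
      · intro h; exact ⟨h1s h, Or.inl h⟩
    · ext i
      simp only [Finset.mem_filter, decide_eq_true_eq]
      constructor
      · rintro ⟨hiQ, (h | h | h)⟩
        · exact absurd hiQ (Finset.disjoint_left.mp hPQ (h1s h))
        · exact h
        · exact absurd hiQ (Finset.disjoint_right.mp hQR (h3s h))
      · intro h; exact ⟨h2s h, Or.inr (Or.inl h)⟩
    · ext i
      simp only [Finset.mem_filter, decide_eq_true_eq]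
      constructor
      · rintro ⟨hiR, (h | h | h)⟩
        · exact absurd hiR (Finset.disjoint_left.mp hPR (h1s h))
        · exact absurd hiR (Finset.disjoint_left.mp hQR (h2s h))
        · exact h
      · intro h; exact ⟨h3s h, Or.inr (Or.inr h)⟩
  rw [← Finset.card_powersetCard, ← Finset.card_powersetCard, ← Finset.card_powersetCard,
    ← Finset.card_product, ← Finset.card_product]
  apply Finset.card_bij' (i := fun z _ => ((P.filter fun i => z i = true),
      ((Q.filter fun i => z i = true), (R.filter fun i => z i = true))))
    (j := fun t _ => fun i => decide (i ∈ t.1 ∨ i ∈ t.2.1 ∨ i ∈ t.2.2))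
  · intro z hz
    simp only [Finset.mem_filter, Finset.mem_univ, true_and] at hz
    simp only [Finset.mem_product, Finset.mem_powersetCard]
    exact ⟨⟨Finset.filter_subset _ _, hz.1⟩, ⟨Finset.filter_subset _ _, hz.2.1⟩,
      ⟨Finset.filter_subset _ _, hz.2.2⟩⟩
  · intro t ht
    simp only [Finset.mem_product, Finset.mem_powersetCard] at ht
    obtain ⟨⟨h1s, h1c⟩, ⟨h2s, h2c⟩, ⟨h3s, h3c⟩⟩ := ht
    obtain ⟨e1, e2, e3⟩ := key t h1s h2s h3s
    simp only [Finset.mem_filter, Finset.mem_univ, true_and]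
    rw [e1, e2, e3]
    exact ⟨h1c, h2c, h3c⟩
  · intro z hz
    funext i
    rcases hcov i with h | h | h
    · by_cases hzi : z i = true <;>
        simp [Finset.mem_filter, h, hzi, Finset.disjoint_left.mp hPQ h,
          Finset.disjoint_left.mp hPR h]
    · by_cases hzi : z i = true <;>
        simp [Finset.mem_filter, h, hzi, Finset.disjoint_right.mp hPQ h,
          Finset.disjoint_left.mp hQR h]
    · by_cases hzi : z i = true <;>
        simp [Finset.mem_filter, h, hzi, Finset.disjoint_right.mp hPR h,
          Finset.disjoint_right.mp hQR h]
  · intro t ht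
    simp only [Finset.mem_product, Finset.mem_powersetCard] at ht
    obtain ⟨⟨h1s, _⟩, ⟨h2s, _⟩, ⟨h3s, _⟩⟩ := ht
    obtain ⟨e1, e2, e3⟩ := key t h1s h2s h3s
    exact Prod.ext e1 (Prod.ext e2 e3)

lemma sc1 (e u d : ℕ) (hd : 1 ≤ d) : 2*(e+1)*(u+1) ≤ (e+1)*(d+u) + (e+d)*(u+1) := by
  nlinarith [Nat.le_mul_of_pos_left (e+u+2) (show 0 < d by omega)]

-- K even case: 2*(x+1) = K ≥ a+1, m = x+2+u
lemma key1 (a c x u : ℕ) (hx : a + 1 ≤ 2*(x+1)) (hc : a + 2 + c = 2*(x+2+u)) :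
    2 * (a.choose (x+1) * c.choose u)
      ≤ a.choose (x+1) * c.choose (u+1) + a.choose x * c.choose u := by
  by_cases hax : a ≤ x
  · have : a.choose (x+1) = 0 := Nat.choose_eq_zero_of_lt (by omega)
    simp [this]
  · push_neg at hax
    obtain ⟨e, he⟩ : ∃ e, a = x + 1 + e := ⟨a - (x+1), by omega⟩
    obtain ⟨d, hd1, hd2⟩ : ∃ d, x + 1 = e + d ∧ 1 ≤ d := ⟨x + 1 - e, by omega, by omega⟩
    set A0 := a.choose x with hA0
    set A1 := a.choose (x+1) with hA1
    set D0 := c.choose u with hD0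
    set D1 := c.choose (u+1) with hD1
    have h1 : A1 * (x+1) = A0 * (e+1) := by
      rw [hA1, hA0, Nat.choose_succ_right_eq a x]; congr 1; omega
    have h2 : D1 * (u+1) = D0 * (d + u) := by
      rw [hD1, hD0, Nat.choose_succ_right_eq c u]; congr 1; omega
    have hpos : 0 < (x+1)*(u+1) := by positivity
    apply Nat.le_of_mul_le_mul_right _ hpos
    calc 2 * (A1 * D0) * ((x+1)*(u+1)) = 2*((A1*(x+1))*(D0*(u+1))) := by ring
      _ = 2*((A0*(e+1))*(D0*(u+1))) := by rw [h1]
      _ = A0*D0*(2*(e+1)*(u+1)) := by ring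
      _ ≤ A0*D0*((e+1)*(d+u) + (e+d)*(u+1)) := Nat.mul_le_mul_left _ (sc1 e u d hd2)
      _ = (A0*(e+1))*(D0*(d+u)) + A0*D0*((e+d)*(u+1)) := by ring
      _ = (A1*(x+1))*(D1*(u+1)) + A0*D0*((x+1)*(u+1)) := by rw [← h1, ← h2, ← hd1]
      _ = (A1*D1 + A0*D0) * ((x+1)*(u+1)) := by ring

-- K odd, u=0 boundary case
lemma key2a (a x : ℕ) (hx : a ≤ 2*x) : a.choose (x+1) ≤ 2 * a.choose x := by
  have h1 : a.choose (x+1) * (x+1) = a.choose x * (a - x) := Nat.choose_succ_right_eq a x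
  have h2 : a.choose x * (a - x) ≤ a.choose x * (x+1) := Nat.mul_le_mul_left _ (by omega)
  have := Nat.le_of_mul_le_mul_right (h1 ▸ h2) (show 0 < x+1 by omega)
  omega

-- K odd case with u = v+1 : 2x+1 = K ≥ a+1, m = x+2+v
lemma key2b (a c x v : ℕ) (hx : a ≤ 2*x) (hc : a + 2 + c = 2*(x+2+v)) :
    a.choose (x+1) * c.choose (v+1) + a.choose x * c.choose v
      ≤ 2 * (a.choose x * c.choose (v+1)) := by
  set A0 := a.choose x with hA0
  set A1 := a.choose (x+1) with hA1
  set Dm := c.choose v with hDm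
  set D0 := c.choose (v+1) with hD0
  by_cases hax : a ≤ x
  · have hA1z : A1 = 0 := Nat.choose_eq_zero_of_lt (by omega)
    have h2 : D0 * (v+1) = Dm * (c - v) := Nat.choose_succ_right_eq c v
    have hcv : c - v = (c - v - (v+1)) + (v+1) := by omega
    have hDmD0 : Dm ≤ D0 := by
      have : Dm * (v+1) ≤ Dm * (c-v) := Nat.mul_le_mul_left _ (by omega)
      rw [← h2] at this
      exact Nat.le_of_mul_le_mul_right this (by omega)
    calc A1 * D0 + A0 * Dm = A0 * Dm := by rw [hA1z]; ring
      _ ≤ A0 * D0 := Nat.mul_le_mul_left _ hDmD0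
      _ ≤ 2 * (A0 * D0) := by omega
  · push_neg at hax
    obtain ⟨e, he, hex⟩ : ∃ e, a = x + e ∧ e ≤ x := ⟨a - x, by omega, by omega⟩
    obtain ⟨d, hd⟩ : ∃ d, x = e + d := ⟨x - e, by omega⟩
    have h1 : A1 * (x+1) = A0 * e := by
      rw [hA1, hA0, Nat.choose_succ_right_eq a x]; congr 1; omega
    have h2 : D0 * (v+1) = Dm * (d+v+2) := by
      rw [hD0, hDm, Nat.choose_succ_right_eq c v]; congr 1; omega
    have hpos : 0 < (x+1)*(d+v+2) := by positivity
    apply Nat.le_of_mul_le_mul_right _ hpos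
    have sc : A0*D0*(e*(d+v+2) + (v+1)*(x+1)) ≤ A0*D0*(2*((x+1)*(d+v+2))) := by
      apply Nat.mul_le_mul_left
      have i1 : e*(d+v+2) ≤ (x+1)*(d+v+2) := Nat.mul_le_mul_right _ (by omega)
      have i2 : (v+1)*(x+1) ≤ (d+v+2)*(x+1) := Nat.mul_le_mul_right _ (by omega)
      calc e*(d+v+2) + (v+1)*(x+1) ≤ (x+1)*(d+v+2) + (d+v+2)*(x+1) := by omega
        _ = 2*((x+1)*(d+v+2)) := by ring
    calc (A1*D0 + A0*Dm) * ((x+1)*(d+v+2))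
        = (A1*(x+1))*(D0*(d+v+2)) + A0*(Dm*(d+v+2))*(x+1) := by ring
      _ = (A0*e)*(D0*(d+v+2)) + A0*(D0*(v+1))*(x+1) := by rw [h1, ← h2]
      _ = A0*D0*(e*(d+v+2) + (v+1)*(x+1)) := by ring
      _ ≤ A0*D0*(2*((x+1)*(d+v+2))) := sc
      _ = 2 * (A0 * D0) * ((x+1)*(d+v+2)) := by ring

def cls (n : ℕ) (w : Fin n → Bool × Bool) (a b : Bool) : Finset (Fin n) :=
  Finset.univ.filter fun i => (w i).2 = a ∧ (w i).1 = b

def Xc (n : ℕ) (w : Fin n → Bool × Bool) (z : Fin n → Bool) : ℕ :=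
  ((cls n w true true).filter fun i => z i = true).card

def Sc (n : ℕ) (w : Fin n → Bool × Bool) (z : Fin n → Bool) : ℕ :=
  ((cls n w true false).filter fun i => z i = true).card

def Uc (n : ℕ) (w : Fin n → Bool × Bool) (z : Fin n → Bool) : ℕ :=
  ((cls n w false false).filter fun i => z i = true).card

lemma cls_card (n : ℕ) (w : Fin n → Bool × Bool) (a b : Bool) :
    (cls n w a b).card = vcount n w a b := rfl

lemma cls_disj (n : ℕ) (w : Fin n → Bool × Bool) {a b a' b' : Bool}
    (h : ¬(a = a' ∧ b = b')) : Disjoint (cls n w a b) (cls n w a' b') := by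
  rw [Finset.disjoint_left]
  intro i hi hj
  simp only [cls, Finset.mem_filter, Finset.mem_univ, true_and] at hi hj
  apply h
  constructor
  · rw [← hi.1, hj.1]
  · rw [← hi.2, hj.2]

lemma cls_cover {n : ℕ} {w : Fin n → Bool × Bool} (h01 : vcount n w false true = 0)
    (i : Fin n) : i ∈ cls n w true true ∨ i ∈ cls n w true false ∨ i ∈ cls n w false false := by
  have hft : ¬((w i).2 = false ∧ (w i).1 = true) := by
    intro hc
    have : i ∈ Finset.univ.filter fun j => (w j).2 = false ∧ (w j).1 = true := by
      simp [hc.1, hc.2]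
    unfold vcount at h01
    rw [Finset.card_eq_zero] at h01
    rw [h01] at this
    exact absurd this (Finset.notMem_empty i)
  simp only [cls, Finset.mem_filter, Finset.mem_univ, true_and]
  cases h2 : (w i).2 <;> cases h1 : (w i).1 <;> simp_all

lemma tot {n : ℕ} {w : Fin n → Bool × Bool} (h01 : vcount n w false true = 0)
    (z : Fin n → Bool) :
    (Finset.univ.filter fun i => z i = true).card = Xc n w z + Sc n w z + Uc n w z := by
  have hset : (Finset.univ.filter fun i => z i = true)
      = ((cls n w true true).filter fun i => z i = true)
        ∪ (((cls n w true false).filter fun i => z i = true)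
          ∪ ((cls n w false false).filter fun i => z i = true)) := by
    ext i
    simp only [Finset.mem_filter, Finset.mem_univ, true_and, Finset.mem_union]
    constructor
    · intro hz
      rcases cls_cover h01 i with h | h | h
      · exact Or.inl ⟨h, hz⟩
      · exact Or.inr (Or.inl ⟨h, hz⟩)
      · exact Or.inr (Or.inr ⟨h, hz⟩)
    · rintro (⟨_, hz⟩ | ⟨_, hz⟩ | ⟨_, hz⟩) <;> exact hz
  rw [hset, Finset.card_union_of_disjoint, Finset.card_union_of_disjoint]
  · unfold Xc Sc Uc; omega
  · exact Finset.disjoint_filter_filter (cls_disj n w (by simp))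
  · rw [Finset.disjoint_union_right]
    exact ⟨Finset.disjoint_filter_filter (cls_disj n w (by simp)),
      Finset.disjoint_filter_filter (cls_disj n w (by simp))⟩

lemma total_card {n : ℕ} {w : Fin n → Bool × Bool} (h01 : vcount n w false true = 0) :
    n = vcount n w true true + vcount n w true false + vcount n w false false := by
  have := tot h01 (fun _ => true)
  simp only [Finset.filter_true, Xc, Sc, Uc] at this
  simpa [Finset.filter_true_of_mem, cls_card, Finset.card_univ] using this

lemma sc_le {n : ℕ} {w : Fin n → Bool × Bool} (h10 : vcount n w true false = 2)
    (z : Fin n → Bool) : Sc n w z ≤ 2 := by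
  have := Finset.card_filter_le (cls n w true false) (fun i => z i = true)
  rw [cls_card, h10] at this
  exact this

lemma xc_le {n : ℕ} {w : Fin n → Bool × Bool} (z : Fin n → Bool) :
    Xc n w z ≤ vcount n w true true := by
  have := Finset.card_filter_le (cls n w true true) (fun i => z i = true)
  rwa [cls_card] at this

-- counting with Assign
lemma CA {n m : ℕ} {w : Fin n → Bool × Bool} (h01 : vcount n w false true = 0)
    (x s u : ℕ) (hsum : x + s + u = m) :
    ((Assign n m).filter fun z => Xc n w z = x ∧ Sc n w z = s).card
      = (vcount n w true true).choose x
        * ((vcount n w true false).choose s * (vcount n w false false).choose u) := by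
  have hset : ((Assign n m).filter fun z => Xc n w z = x ∧ Sc n w z = s)
      = (Finset.univ.filter fun z : Fin n → Bool =>
          ((cls n w true true).filter fun i => z i = true).card = x ∧
          ((cls n w true false).filter fun i => z i = true).card = s ∧
          ((cls n w false false).filter fun i => z i = true).card = u) := by
    ext z
    simp only [Assign, Finset.mem_filter, Finset.mem_univ, true_and]
    constructor
    · rintro ⟨hA, hX, hS⟩
      have hX' : ((cls n w true true).filter fun i => z i = true).card = x := hX
      have hS' : ((cls n w true false).filter fun i => z i = true).card = s := hS
      refine ⟨hX', hS', ?_⟩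
      have ht := tot h01 z
      rw [hA] at ht
      unfold Xc Sc Uc at ht
      omega
    · rintro ⟨hX, hS, hU⟩
      have hX' : Xc n w z = x := hX
      have hS' : Sc n w z = s := hS
      have hU' : Uc n w z = u := hU
      have ht := tot h01 z
      refine ⟨?_, hX', hS'⟩
      omega
  rw [hset, count3 _ _ _ (cls_cover h01) (cls_disj n w (by simp)) (cls_disj n w (by simp))
    (cls_disj n w (by simp)), cls_card, cls_card, cls_card]

lemma CA0 {n m : ℕ} {w : Fin n → Bool × Bool} (h01 : vcount n w false true = 0)
    (x s : ℕ) (hsum : m < x + s) :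
    ((Assign n m).filter fun z => Xc n w z = x ∧ Sc n w z = s).card = 0 := by
  rw [Finset.card_eq_zero, Finset.eq_empty_iff_forall_notMem]
  rintro z hz
  simp only [Assign, Finset.mem_filter, Finset.mem_univ, true_and] at hz
  obtain ⟨hA, hX, hS⟩ := hz
  have := tot h01 z
  rw [hA] at this
  omega

def Mcnt (n m : ℕ) (w : Fin n → Bool × Bool) (K : ℕ) : ℕ :=
  ((Assign n m).filter fun z => 2 * Xc n w z + Sc n w z = K).card


lemma Mcnt_split_even {n m : ℕ} {w : Fin n → Bool × Bool}
    (h10 : vcount n w true false = 2) (x : ℕ) :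
    Mcnt n m w (2*(x+1))
      = ((Assign n m).filter fun z => Xc n w z = x+1 ∧ Sc n w z = 0).card
        + ((Assign n m).filter fun z => Xc n w z = x ∧ Sc n w z = 2).card := by
  unfold Mcnt
  rw [← Finset.card_union_of_disjoint]
  · congr 1
    ext z
    simp only [Finset.mem_filter, Finset.mem_union]
    have hs := sc_le h10 z
    constructor
    · rintro ⟨hA, hP⟩
      by_cases h0 : Sc n w z = 0
      · exact Or.inl ⟨hA, by omega, h0⟩
      · exact Or.inr ⟨hA, by omega, by omega⟩
    · rintro (⟨hA, h1, h2⟩ | ⟨hA, h1, h2⟩) <;> exact ⟨hA, by omega⟩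
  · rw [Finset.disjoint_left]
    rintro z hz hz'
    simp only [Finset.mem_filter] at hz hz'
    omega

lemma Mcnt_split_odd {n m : ℕ} {w : Fin n → Bool × Bool}
    (h10 : vcount n w true false = 2) (x : ℕ) :
    Mcnt n m w (2*x+1)
      = ((Assign n m).filter fun z => Xc n w z = x ∧ Sc n w z = 1).card := by
  unfold Mcnt
  congr 1
  ext z
  simp only [Finset.mem_filter]
  have hs := sc_le h10 z
  constructor
  · rintro ⟨hA, hP⟩
    exact ⟨hA, by omega, by omega⟩
  · rintro ⟨hA, h1, h2⟩
    exact ⟨hA, by omega⟩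

lemma Mcnt_step {n m : ℕ} {w : Fin n → Bool × Bool} (hn : n = 2*m)
    (h10 : vcount n w true false = 2) (h01 : vcount n w false true = 0)
    (K : ℕ) (hK : vcount n w true true + 1 ≤ K) :
    Mcnt n m w (K+1) ≤ Mcnt n m w K := by
  set a := vcount n w true true with ha
  set c := vcount n w false false with hc
  have htot : a + 2 + c = 2*m := by
    have := total_card h01
    rw [← ha, h10, ← hc] at this
    omega
  rcases Nat.even_or_odd K with ⟨x', hx'⟩ | ⟨x, hx⟩
  · -- K = 2(x+1) even, K+1 odd
    have hx1 : 1 ≤ x' := by omega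
    obtain ⟨x, rfl⟩ : ∃ x, x' = x + 1 := ⟨x' - 1, by omega⟩
    have hKe : K = 2*(x+1) := by omega
    rw [hKe, Mcnt_split_even h10, Mcnt_split_odd h10]
    by_cases hxm : x + 2 ≤ m
    · obtain ⟨u, hu⟩ : ∃ u, m = x + 2 + u := ⟨m - (x+2), by omega⟩
      rw [CA h01 (x+1) 1 u (by omega), CA h01 (x+1) 0 (u+1) (by omega),
        CA h01 x 2 u (by omega), h10, ← ha, ← hc]
      have h21 : (2:ℕ).choose 1 = 2 := rfl
      have h20 : (2:ℕ).choose 0 = 1 := rfl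
      have h22 : (2:ℕ).choose 2 = 1 := rfl
      rw [h21, h20, h22]
      have := key1 a c x u (by omega) (by omega)
      calc a.choose (x+1) * (2 * c.choose u) = 2 * (a.choose (x+1) * c.choose u) := by ring
        _ ≤ a.choose (x+1) * c.choose (u+1) + a.choose x * c.choose u := this
        _ = a.choose (x+1) * (1 * c.choose (u+1)) + a.choose x * (1 * c.choose u) := by ring
    · rw [CA0 h01 (x+1) 1 (by omega)]
      exact Nat.zero_le _
  · -- K = 2x+1 odd, K+1 = 2(x+1) even
    have hax : a ≤ 2*x := by omega
    rw [hx, show 2*x+1+1 = 2*(x+1) by omega, Mcnt_split_even h10, Mcnt_split_odd h10]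
    by_cases hxm1 : x + 1 ≤ m
    · by_cases hxm2 : x + 2 ≤ m
      · obtain ⟨v, hv⟩ : ∃ v, m = x + 2 + v := ⟨m - (x+2), by omega⟩
        rw [CA h01 x 1 (v+1) (by omega), CA h01 (x+1) 0 (v+1) (by omega),
          CA h01 x 2 v (by omega), h10, ← ha, ← hc]
        have h21 : (2:ℕ).choose 1 = 2 := rfl
        have h20 : (2:ℕ).choose 0 = 1 := rfl
        have h22 : (2:ℕ).choose 2 = 1 := rfl
        rw [h21, h20, h22]
        have := key2b a c x v hax (by omega)
        calc a.choose (x+1) * (1 * c.choose (v+1)) + a.choose x * (1 * c.choose v)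
            = a.choose (x+1) * c.choose (v+1) + a.choose x * c.choose v := by ring
          _ ≤ 2 * (a.choose x * c.choose (v+1)) := this
          _ = a.choose x * (2 * c.choose (v+1)) := by ring
      · -- x + 1 = m
        have hm1 : m = x + 1 := by omega
        rw [CA h01 x 1 0 (by omega), CA h01 (x+1) 0 0 (by omega), CA0 h01 x 2 (by omega),
          h10, ← ha, ← hc]
        have h21 : (2:ℕ).choose 1 = 2 := rfl
        have h20 : (2:ℕ).choose 0 = 1 := rfl
        rw [h21, h20]
        have := key2a a x hax
        simp only [Nat.choose_zero_right]
        calc a.choose (x+1) * (1 * 1) + 0 = a.choose (x+1) := by ring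
          _ ≤ 2 * a.choose x := this
          _ = a.choose x * (2 * 1) := by ring
    · rw [CA0 h01 x 1 (by omega), CA0 h01 (x+1) 0 (by omega), CA0 h01 x 2 (by omega)]

lemma Mcnt_mono {n m : ℕ} {w : Fin n → Bool × Bool} (hn : n = 2*m)
    (h10 : vcount n w true false = 2) (h01 : vcount n w false true = 0)
    (K K' : ℕ) (hK : vcount n w true true + 1 ≤ K) (hKK : K ≤ K') :
    Mcnt n m w K' ≤ Mcnt n m w K := by
  induction K', hKK using Nat.le_induction with
  | base => exact le_refl _
  | succ K' hKK ih => exact le_trans (Mcnt_step hn h10 h01 K' (by omega)) ih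


lemma treated_card {n : ℕ} (w : Fin n → Bool × Bool) (z : Fin n → Bool) :
    (Finset.univ.filter fun j => z j = true ∧ (w j).2 = true).card
      = Xc n w z + Sc n w z := by
  have hset : (Finset.univ.filter fun j => z j = true ∧ (w j).2 = true)
      = ((cls n w true true).filter fun i => z i = true)
        ∪ ((cls n w true false).filter fun i => z i = true) := by
    ext j
    simp only [Finset.mem_filter, Finset.mem_univ, true_and, Finset.mem_union, cls]
    cases h1 : (w j).1 <;> cases h2 : (w j).2 <;> simp [h1, h2] <;> tauto
  rw [hset, Finset.card_union_of_disjoint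
    (Finset.disjoint_filter_filter (cls_disj n w (by simp)))]
  rfl

lemma sum_if_treated {n : ℕ} (w : Fin n → Bool × Bool) (z : Fin n → Bool) :
    (∑ j, if z j then b2r (obsOutcome n w z j) else 0)
      = ((Xc n w z + Sc n w z : ℕ) : ℝ) := by
  have hpt : ∀ j, (if z j then b2r (obsOutcome n w z j) else 0)
      = if (z j = true ∧ (w j).2 = true) then (1:ℝ) else 0 := by
    intro j
    unfold obsOutcome b2r
    cases hz : z j <;> cases h2 : (w j).2 <;> simp [hz, h2]
  rw [Finset.sum_congr rfl (fun j _ => hpt j), Finset.sum_boole, treated_card]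

lemma control_card {n : ℕ} {w : Fin n → Bool × Bool} (h01 : vcount n w false true = 0)
    (z : Fin n → Bool) :
    (Finset.univ.filter fun j => z j = false ∧ (w j).1 = true).card
      = vcount n w true true - Xc n w z := by
  have hft : (cls n w false true) = ∅ := by
    rw [← Finset.card_eq_zero, cls_card]; exact h01
  have hset : (Finset.univ.filter fun j => z j = false ∧ (w j).1 = true)
      = ((cls n w true true).filter fun i => z i = false) := by
    ext j
    simp only [Finset.mem_filter, Finset.mem_univ, true_and, cls]
    cases h1 : (w j).1 <;> cases h2 : (w j).2 <;> simp [h1, h2]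
    exact absurd (show j ∈ cls n w false true by simp [cls, h1, h2])
      (by rw [hft]; exact Finset.notMem_empty j)
  rw [hset]
  have hsplit := Finset.card_filter_add_card_filter_not
    (s := cls n w true true) (p := fun i => z i = true)
  have hneg : ((cls n w true true).filter fun i => ¬ (z i = true))
      = ((cls n w true true).filter fun i => z i = false) := by
    apply Finset.filter_congr
    intro i _
    simp
  rw [hneg] at hsplit
  have hcc := cls_card n w true true
  have h1 : Xc n w (fun i => !(z i)) = ((cls n w true true).filter fun i => (!(z i)) = true).card := rfl
  have h2 : Xc n w z = ((cls n w true true).filter fun i => z i = true).card := rfl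
  omega

lemma sum_if_control {n : ℕ} {w : Fin n → Bool × Bool} (h01 : vcount n w false true = 0)
    (z : Fin n → Bool) :
    (∑ j, if z j then 0 else b2r (obsOutcome n w z j))
      = ((vcount n w true true - Xc n w z : ℕ) : ℝ) := by
  have hpt : ∀ j, (if z j then 0 else b2r (obsOutcome n w z j))
      = if (z j = false ∧ (w j).1 = true) then (1:ℝ) else 0 := by
    intro j
    unfold obsOutcome b2r
    cases hz : z j <;> cases h1 : (w j).1 <;> simp [hz, h1]
  rw [Finset.sum_congr rfl (fun j _ => hpt j), Finset.sum_boole, control_card h01]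

lemma neyman_eq {n m : ℕ} {w : Fin n → Bool × Bool} (hn : n = 2*m) (hm : 0 < m)
    (h01 : vcount n w false true = 0) (z : Fin n → Bool) :
    neyman n m (obsOutcome n w z) z
      = (((2 * Xc n w z + Sc n w z : ℕ) : ℝ) - (vcount n w true true : ℝ)) / (m : ℝ) := by
  unfold neyman
  rw [sum_if_treated, sum_if_control h01]
  have hnm : (n : ℝ) - (m : ℝ) = (m : ℝ) := by rw [hn]; push_cast; ring
  rw [hnm, div_sub_div_same]
  congr 1
  have hXa := xc_le (w := w) z
  rw [Nat.cast_sub hXa]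
  push_cast
  ring

lemma sate_eq {n m : ℕ} {w : Fin n → Bool × Bool} (hn : n = 2*m) (hm : 0 < m)
    (h10 : vcount n w true false = 2) (h01 : vcount n w false true = 0) :
    sate n w = 1 / (m : ℝ) := by
  have hft : (cls n w false true) = ∅ := by
    rw [← Finset.card_eq_zero, cls_card]; exact h01
  unfold sate
  rw [Finset.sum_sub_distrib]
  have e2 : (∑ j, b2r ((w j).2)) = ((vcount n w true true + vcount n w true false : ℕ) : ℝ) := by
    have hpt : ∀ j : Fin n, b2r ((w j).2) = if ((w j).2 = true) then (1:ℝ) else 0 := by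
      intro j; unfold b2r; cases h : (w j).2 <;> simp [h]
    rw [Finset.sum_congr rfl (fun j _ => hpt j), Finset.sum_boole]
    have hset : (Finset.univ.filter fun j => (w j).2 = true)
        = (cls n w true true) ∪ (cls n w true false) := by
      ext j
      simp only [Finset.mem_filter, Finset.mem_univ, true_and, Finset.mem_union, cls]
      cases h1 : (w j).1 <;> cases h2 : (w j).2 <;> simp [h1, h2]
    rw [hset, Finset.card_union_of_disjoint (cls_disj n w (by simp)), cls_card, cls_card]
  have e1 : (∑ j, b2r ((w j).1)) = ((vcount n w true true : ℕ) : ℝ) := by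
    have hpt : ∀ j : Fin n, b2r ((w j).1) = if ((w j).1 = true) then (1:ℝ) else 0 := by
      intro j; unfold b2r; cases h : (w j).1 <;> simp [h]
    rw [Finset.sum_congr rfl (fun j _ => hpt j), Finset.sum_boole]
    have hset : (Finset.univ.filter fun j => (w j).1 = true)
        = (cls n w true true) ∪ (cls n w false true) := by
      ext j
      simp only [Finset.mem_filter, Finset.mem_univ, true_and, Finset.mem_union, cls]
      cases h1 : (w j).1 <;> cases h2 : (w j).2 <;> simp [h1, h2]
    rw [hset, Finset.card_union_of_disjoint (cls_disj n w (by simp)), cls_card, cls_card,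
      h01]
    norm_num
  have hm' : (m : ℝ) ≠ 0 := by
    have : (0:ℝ) < m := by exact_mod_cast hm
    linarith
  have hnr : (n:ℝ) = 2*(m:ℝ) := by rw [hn]; push_cast; ring
  rw [e2, e1, h10, hnr]
  push_cast
  field_simp
  ring

lemma Xc_compl {n : ℕ} (w : Fin n → Bool × Bool) (z : Fin n → Bool) :
    Xc n w (fun i => !(z i)) = vcount n w true true - Xc n w z := by
  have hsplit := Finset.card_filter_add_card_filter_not
    (s := cls n w true true) (p := fun i => z i = true)
  have hneg : ((cls n w true true).filter fun i => ¬ (z i = true))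
      = ((cls n w true true).filter fun i => (!(z i)) = true) := by
    apply Finset.filter_congr; intro i _; simp
  rw [hneg] at hsplit
  have hcc := cls_card n w true true
  have h1 : Xc n w (fun i => !(z i)) = ((cls n w true true).filter fun i => (!(z i)) = true).card := rfl
  have h2 : Xc n w z = ((cls n w true true).filter fun i => z i = true).card := rfl
  omega

lemma Sc_compl {n : ℕ} (w : Fin n → Bool × Bool) (z : Fin n → Bool) :
    Sc n w (fun i => !(z i)) = vcount n w true false - Sc n w z := by
  have hsplit := Finset.card_filter_add_card_filter_not
    (s := cls n w true false) (p := fun i => z i = true)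
  have hneg : ((cls n w true false).filter fun i => ¬ (z i = true))
      = ((cls n w true false).filter fun i => (!(z i)) = true) := by
    apply Finset.filter_congr; intro i _; simp
  rw [hneg] at hsplit
  have hcc := cls_card n w true false
  have h1 : Sc n w (fun i => !(z i)) = ((cls n w true false).filter fun i => (!(z i)) = true).card := rfl
  have h2 : Sc n w z = ((cls n w true false).filter fun i => z i = true).card := rfl
  omega

lemma Assign_compl {n m : ℕ} (hn : n = 2*m) {z : Fin n → Bool} (hz : z ∈ Assign n m) :
    (fun i => !(z i)) ∈ Assign n m := by
  simp only [Assign, Finset.mem_filter, Finset.mem_univ, true_and] at hz ⊢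
  have hsplit := Finset.card_filter_add_card_filter_not
    (s := (Finset.univ : Finset (Fin n))) (p := fun i => z i = true)
  have hneg : ((Finset.univ : Finset (Fin n)).filter fun i => ¬ (z i = true))
      = (Finset.univ.filter fun i => (!(z i)) = true) := by
    apply Finset.filter_congr; intro i _; simp
  rw [hneg] at hsplit
  have hcu : (Finset.univ : Finset (Fin n)).card = n := Finset.card_univ.trans (by simp)
  omega

lemma Assign_card_pos {n m : ℕ} (hn : n = 2*m) : 0 < (Assign n m).card := by
  rw [Finset.card_pos]
  refine ⟨fun i => decide ((i : ℕ) < m), ?_⟩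
  simp only [Assign, Finset.mem_filter, Finset.mem_univ, true_and, decide_eq_true_eq]
  have hmn : m ≤ n := by omega
  have hset : (Finset.univ.filter fun i : Fin n => (i : ℕ) < m)
      = (Finset.range m).attachFin (fun j hj => by
          rw [Finset.mem_range] at hj; omega) := by
    ext i
    simp [Finset.mem_attachFin, Finset.mem_range]
  rw [hset, Finset.card_attachFin, Finset.card_range]


lemma neyman_compl {n m : ℕ} {w : Fin n → Bool × Bool} (hn : n = 2*m) (hm : 0 < m)
    (h10 : vcount n w true false = 2) (h01 : vcount n w false true = 0) (z : Fin n → Bool) :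
    neyman n m (obsOutcome n w (fun i => !(z i))) (fun i => !(z i))
      = 2/(m:ℝ) - neyman n m (obsOutcome n w z) z := by
  rw [neyman_eq hn hm h01, neyman_eq hn hm h01, Xc_compl, Sc_compl, h10]
  have hXa := xc_le (w := w) z
  have hS2 := sc_le h10 z
  have hm' : (m:ℝ) ≠ 0 := by
    have : (0:ℝ) < m := by exact_mod_cast hm
    linarith
  rw [Nat.cast_add, Nat.cast_mul, Nat.cast_sub hXa, Nat.cast_sub hS2]
  push_cast
  field_simp
  ring

lemma pmf_eq {n m : ℕ} {w : Fin n → Bool × Bool} (hn : n = 2*m) (hm : 0 < m)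
    (h01 : vcount n w false true = 0) (j : ℤ) (hj : 1 ≤ j) :
    pmfT n m w ((j:ℝ)/(m:ℝ))
      = (Mcnt n m w (j.toNat + vcount n w true true) : ℝ) / ((Assign n m).card : ℝ) := by
  have hm' : (0:ℝ) < m := by exact_mod_cast hm
  simp only [pmfT, Pr, Mcnt, Finset.filter_congr_decidable]
  congr 2
  refine congrArg _ (Finset.filter_congr ?_)
  intro z _
  rw [neyman_eq hn hm h01 z]
  have key : ((((2 * Xc n w z + Sc n w z : ℕ)):ℝ) - (vcount n w true true:ℝ))/(m:ℝ)
        = (j:ℝ)/(m:ℝ)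
      ↔ ((2 * Xc n w z + Sc n w z : ℕ) : ℤ) = j + (vcount n w true true : ℤ) := by
    rw [div_eq_div_iff (ne_of_gt hm') (ne_of_gt hm')]
    constructor
    · intro h
      have h2 : (((2 * Xc n w z + Sc n w z : ℕ)):ℝ) - (vcount n w true true:ℝ) = (j:ℝ) :=
        mul_right_cancel₀ (ne_of_gt hm') h
      have h3 : (((2 * Xc n w z + Sc n w z : ℕ)):ℝ)
          = (j:ℝ) + (vcount n w true true:ℝ) := by linarith
      exact_mod_cast h3
    · intro h
      have h3 : (((2 * Xc n w z + Sc n w z : ℕ)):ℝ)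
          = (j:ℝ) + (vcount n w true true:ℝ) := by exact_mod_cast h
      rw [h3]; ring
  rw [key]
  omega

/-- In a balanced design, for a count vector of the form
`v = (v₁₁, 2, 0, v₀₀)`, the pmf of `T(v, Z)` is symmetric–decreasing on the lattice
`m⁻¹ℤ`. -/
theorem stmt14 (m : ℕ) (hm : 0 < m) (n : ℕ) (hn : n = 2 * m)
    (w : Fin n → Bool × Bool)
    (h10 : vcount n w true false = 2) (h01 : vcount n w false true = 0) :
    SDon (pmfT n m w) (lattZ m) (sate n w) := by
  have hs := sate_eq hn hm h10 h01
  have hm' : (0:ℝ) < m := by exact_mod_cast hm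
  constructor
  · -- symmetry
    intro x _
    simp only [pmfT, Pr, Finset.filter_congr_decidable]
    congr 2
    apply Finset.card_bij' (i := fun z _ => fun i => !(z i)) (j := fun z _ => fun i => !(z i))
    · intro z hz
      simp only [Finset.mem_filter] at hz ⊢
      refine ⟨Assign_compl hn hz.1, ?_⟩
      rw [neyman_compl hn hm h10 h01 z, hz.2, hs]
      ring
    · intro z hz
      simp only [Finset.mem_filter] at hz ⊢
      refine ⟨Assign_compl hn hz.1, ?_⟩
      rw [neyman_compl hn hm h10 h01 z, hz.2, hs]
      ring
    · intro z _; funext i; simp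
    · intro z _; funext i; simp
  · -- monotone
    intro x y hx hxy hxL hyL
    obtain ⟨k, hk⟩ := hxL
    obtain ⟨k', hk'⟩ := hyL
    have hk1 : 1 ≤ k := by
      have h1 : (1:ℝ)/m ≤ (k:ℝ)/m := by rw [← hk, hs]; linarith
      have h2 : (1:ℝ) ≤ (k:ℝ) := by
        rw [div_le_div_iff₀ hm' hm'] at h1
        exact le_of_mul_le_mul_right h1 hm'
      exact_mod_cast h2
    have hkk : k ≤ k' := by
      have h1 : (k:ℝ)/m ≤ (k':ℝ)/m := by rw [← hk, ← hk']; linarith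
      have h2 : (k:ℝ) ≤ (k':ℝ) := by
        rw [div_le_div_iff₀ hm' hm'] at h1
        exact le_of_mul_le_mul_right h1 hm'
      exact_mod_cast h2
    rw [hk, hk', pmf_eq hn hm h01 k hk1, pmf_eq hn hm h01 k' (le_trans hk1 hkk)]
    have hD : (0:ℝ) < ((Assign n m).card : ℝ) := by exact_mod_cast Assign_card_pos hn
    have hMle : Mcnt n m w (k'.toNat + vcount n w true true)
        ≤ Mcnt n m w (k.toNat + vcount n w true true) :=
      Mcnt_mono hn h10 h01 _ _ (by omega) (by omega)
    gcongr
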